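/- Let p_1 ≥ ⋯ ≥ p_m > 0 with n ≤ m, and suppose density matrices ρ_i and a POVM Π_i on ℂ^n achieve Σ_i p_i Tr(Π_i ρ_i) = Σ_{i=1}^n p_i. Then Σ_{i=1}^m λ_max(Π_i) = n. -/

import Mathlib

open Matrix ComplexOrder

/-- The largest eigenvalue of a Hermitian matrix. -/
noncomputable def lamMax {n : ℕ} {A : Matrix (Fin n) (Fin n) ℂ} (hA : A.IsHermitian) : ℝ :=
  ⨆ i, hA.eigenvalues i

namespace OptAux

variable {k : ℕ}

lemma psd_sum {ι : Type*} (s : Finset ι) (f : ι → Matrix (Fin k) (Fin k) ℂ)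
    (h : ∀ i ∈ s, (f i).PosSemidef) : (∑ i ∈ s, f i).PosSemidef := by
  induction s using Finset.cons_induction with
  | empty => simpa using (Matrix.PosSemidef.zero (n := Fin k) (R := ℂ))
  | cons a s ha ih =>
      rw [Finset.sum_cons]
      exact (h a (Finset.mem_cons_self _ _)).add (ih fun i hi => h i (Finset.mem_cons_of_mem hi))

lemma diag_re_nonneg {C : Matrix (Fin k) (Fin k) ℂ} (hC : C.PosSemidef) (j : Fin k) :
    0 ≤ (C j j).re := by
  have h := hC.re_dotProduct_nonneg (Pi.single j 1)
  simpa [Matrix.mulVec_single, dotProduct, Pi.single_apply, apply_ite,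
    Finset.sum_ite_eq'] using h

lemma trace_eq_sum_eigen {A : Matrix (Fin k) (Fin k) ℂ} (hA : A.IsHermitian) :
    A.trace = ∑ i, (hA.eigenvalues i : ℂ) := by
  conv_lhs => rw [hA.spectral_theorem]
  rw [Unitary.conjStarAlgAut_apply, Matrix.trace_mul_cycle,
    (Matrix.mem_unitaryGroup_iff').mp hA.eigenvectorUnitary.2, Matrix.one_mul,
    Matrix.trace_diagonal]
  simp

lemma eig_le_lamMax {A : Matrix (Fin k) (Fin k) ℂ} (hA : A.IsHermitian) (i : Fin k) :
    hA.eigenvalues i ≤ lamMax hA :=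
  le_ciSup (Set.Finite.bddAbove (Set.finite_range _)) i

lemma lamMax_nonneg [Nonempty (Fin k)] {A : Matrix (Fin k) (Fin k) ℂ} (hA : A.PosSemidef) :
    0 ≤ lamMax hA.isHermitian :=
  le_trans (hA.eigenvalues_nonneg (Classical.arbitrary _)) (eig_le_lamMax _ _)

lemma lamMax_le_re_trace [Nonempty (Fin k)] {A : Matrix (Fin k) (Fin k) ℂ}
    (hA : A.PosSemidef) : lamMax hA.isHermitian ≤ A.trace.re := by
  have htr : A.trace.re = ∑ i, hA.isHermitian.eigenvalues i := by
    rw [trace_eq_sum_eigen hA.isHermitian]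
    simp [Complex.re_sum]
  rw [htr]
  exact ciSup_le fun i => Finset.single_le_sum (fun j _ => hA.eigenvalues_nonneg j)
    (Finset.mem_univ i)

lemma trace_conj_cycle (V D B : Matrix (Fin k) (Fin k) ℂ) :
    (V * D * star V * B).trace = (D * (star V * B * V)).trace := by
  calc (V * D * star V * B).trace = (V * (D * (star V * B))).trace := by
        rw [Matrix.mul_assoc, Matrix.mul_assoc]
    _ = ((D * (star V * B)) * V).trace := Matrix.trace_mul_comm _ _
    _ = (D * (star V * B * V)).trace := by rw [Matrix.mul_assoc]

lemma re_trace_aux (e : Fin k → ℝ) (c : ℝ) (he : ∀ j, e j ≤ c)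
    (V B : Matrix (Fin k) (Fin k) ℂ) (hB : B.PosSemidef) (hVV : V * star V = 1) :
    ((V * Matrix.diagonal (fun j => (e j : ℂ)) * star V * B).trace).re ≤ c * B.trace.re := by
  rw [trace_conj_cycle]
  have hCpsd : (star V * B * V).PosSemidef := hB.conjTranspose_mul_mul_same V
  have htrC : (star V * B * V).trace = B.trace := by
    rw [Matrix.trace_mul_cycle, hVV, Matrix.one_mul]
  have hdc : (Matrix.diagonal (fun j => (e j : ℂ)) * (star V * B * V)).trace
      = ∑ j, (e j : ℂ) * (star V * B * V) j j := by
    simp [Matrix.trace, Matrix.diag, Matrix.diagonal_mul]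
  rw [hdc, ← htrC]
  have h1 : (∑ j, (e j : ℂ) * (star V * B * V) j j).re
      = ∑ j, e j * ((star V * B * V) j j).re := by
    rw [Complex.re_sum]
    exact Finset.sum_congr rfl fun j _ => Complex.re_ofReal_mul _ _
  have h2 : ((star V * B * V).trace).re = ∑ j, ((star V * B * V) j j).re := by
    simp [Matrix.trace, Matrix.diag, Complex.re_sum]
  rw [h1, h2, Finset.mul_sum]
  exact Finset.sum_le_sum fun j _ =>
    mul_le_mul_of_nonneg_right (he j) (diag_re_nonneg hCpsd j)

lemma re_trace_mul_le {A B : Matrix (Fin k) (Fin k) ℂ} (hA : A.PosSemidef)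
    (hB : B.PosSemidef) :
    ((A * B).trace).re ≤ lamMax hA.isHermitian * B.trace.re := by
  have hAeq : A = (hA.isHermitian.eigenvectorUnitary : Matrix (Fin k) (Fin k) ℂ) *
      Matrix.diagonal (fun j => ((hA.isHermitian.eigenvalues j : ℝ) : ℂ)) *
      star (hA.isHermitian.eigenvectorUnitary : Matrix (Fin k) (Fin k) ℂ) :=
    hA.isHermitian.spectral_theorem
  have hVV : (hA.isHermitian.eigenvectorUnitary : Matrix (Fin k) (Fin k) ℂ) *
      star (hA.isHermitian.eigenvectorUnitary : Matrix (Fin k) (Fin k) ℂ) = 1 :=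
    (Matrix.mem_unitaryGroup_iff).mp hA.isHermitian.eigenvectorUnitary.2
  calc ((A * B).trace).re
      = (((hA.isHermitian.eigenvectorUnitary : Matrix (Fin k) (Fin k) ℂ) *
          Matrix.diagonal (fun j => ((hA.isHermitian.eigenvalues j : ℝ) : ℂ)) *
          star (hA.isHermitian.eigenvectorUnitary : Matrix (Fin k) (Fin k) ℂ) * B).trace).re := by
        rw [← hAeq]
    _ ≤ lamMax hA.isHermitian * B.trace.re :=
        re_trace_aux _ _ (fun j => eig_le_lamMax hA.isHermitian j) _ B hB hVV

open scoped ComplexOrder in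
lemma dot_self_eigenbasis {A : Matrix (Fin k) (Fin k) ℂ} (hA : A.IsHermitian) (j : Fin k) :
    dotProduct (star ⇑(hA.eigenvectorBasis j)) ⇑(hA.eigenvectorBasis j) = 1 := by
  have h1 : (inner ℂ (hA.eigenvectorBasis j) (hA.eigenvectorBasis j) : ℂ) = 1 := by
    rw [inner_self_eq_norm_sq_to_K, hA.eigenvectorBasis.orthonormal.1 j]
    norm_num
  rw [EuclideanSpace.inner_eq_star_dotProduct, dotProduct_comm] at h1
  exact h1

lemma lamMax_le_one [Nonempty (Fin k)] {A : Matrix (Fin k) (Fin k) ℂ} (hA : A.PosSemidef)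
    (h1A : (1 - A).PosSemidef) : lamMax hA.isHermitian ≤ 1 := by
  apply ciSup_le
  intro j
  rw [hA.isHermitian.eigenvalues_eq]
  have hsub : star ⇑(hA.isHermitian.eigenvectorBasis j) ⬝ᵥ
        ((1 - A) *ᵥ ⇑(hA.isHermitian.eigenvectorBasis j))
      = 1 - star ⇑(hA.isHermitian.eigenvectorBasis j) ⬝ᵥ
        (A *ᵥ ⇑(hA.isHermitian.eigenvectorBasis j)) := by
    rw [Matrix.sub_mulVec, dotProduct_sub, Matrix.one_mulVec,
      dot_self_eigenbasis hA.isHermitian j]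
  have h := h1A.re_dotProduct_nonneg ⇑(hA.isHermitian.eigenvectorBasis j)
  rw [hsub] at h
  have h2 : RCLike.re ((1 : ℂ) - star ⇑(hA.isHermitian.eigenvectorBasis j) ⬝ᵥ
      (A *ᵥ ⇑(hA.isHermitian.eigenvectorBasis j)))
      = 1 - RCLike.re (star ⇑(hA.isHermitian.eigenvectorBasis j) ⬝ᵥ
      (A *ᵥ ⇑(hA.isHermitian.eigenvectorBasis j))) := by
    rw [map_sub, RCLike.one_re]
  rw [h2] at h
  linarith

end OptAux

open OptAux

/-- If an encoding-retrieval setup attains the optimum `Σ_{i<n} p i`, then the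
maximal eigenvalues of its measurement operators sum to the dimension `n`. -/
theorem optimal_setup_lamMax_sum {n m : ℕ} (hnm : n ≤ m)
    (p : Fin m → ℝ) (hp_pos : ∀ i, 0 < p i)
    (hp_mono : ∀ i j : Fin m, i ≤ j → p j ≤ p i)
    (Pi : Fin m → Matrix (Fin n) (Fin n) ℂ) (hPi : ∀ i, (Pi i).PosSemidef)
    (hPisum : ∑ i, Pi i = 1)
    (ρ : Fin m → Matrix (Fin n) (Fin n) ℂ) (hρ : ∀ i, (ρ i).PosSemidef)
    (hρtr : ∀ i, (ρ i).trace = 1)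
    (hopt : ∑ i, (p i : ℂ) * (Pi i * ρ i).trace =
      ((∑ i ∈ Finset.univ.filter (fun i : Fin m => (i : ℕ) < n), p i : ℝ) : ℂ)) :
    ∑ i, lamMax (hPi i).isHermitian = (n : ℝ) := by
  classical
  rcases Nat.eq_zero_or_pos n with hn0 | hn
  · subst hn0
    simp [lamMax, Real.iSup_of_isEmpty]
  haveI : Nonempty (Fin n) := ⟨⟨0, hn⟩⟩
  set lam : Fin m → ℝ := fun i => lamMax (hPi i).isHermitian with hlam
  set F : Finset (Fin m) := Finset.univ.filter (fun i : Fin m => (i : ℕ) < n) with hF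
  -- upper bound : ∑ lam ≤ n
  have htrsum : ∑ i, ((Pi i).trace).re = (n : ℝ) := by
    have h1 : (∑ i, (Pi i).trace) = (n : ℂ) := by
      rw [← Matrix.trace_sum, hPisum, Matrix.trace_one]
      simp
    calc ∑ i, ((Pi i).trace).re = (∑ i, (Pi i).trace).re := (Complex.re_sum _ _).symm
      _ = (n : ℝ) := by rw [h1]; simp
  have hub : ∑ i, lam i ≤ (n : ℝ) := by
    rw [← htrsum]
    exact Finset.sum_le_sum fun i _ => lamMax_le_re_trace (hPi i)
  -- each lam in [0,1]
  have hlam0 : ∀ i, 0 ≤ lam i := fun i => lamMax_nonneg (hPi i)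
  have hone : ∀ i, ((1 : Matrix (Fin n) (Fin n) ℂ) - Pi i).PosSemidef := by
    intro i
    have h := Finset.add_sum_erase Finset.univ Pi (Finset.mem_univ i)
    rw [hPisum] at h
    have hsum : (∑ j ∈ Finset.univ.erase i, Pi j) = 1 - Pi i := by
      rw [eq_sub_iff_add_eq, add_comm]
      exact h
    rw [← hsum]
    exact psd_sum _ _ (fun j _ => hPi j)
  have hlam1 : ∀ i, lam i ≤ 1 := fun i => lamMax_le_one (hPi i) (hone i)
  -- real form of optimality
  set t : Fin m → ℝ := fun i => ((Pi i * ρ i).trace).re with ht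
  have hopt' : ∑ i, p i * t i = ∑ i ∈ F, p i := by
    have h := congrArg Complex.re hopt
    rw [Complex.re_sum] at h
    simpa [Complex.re_ofReal_mul] using h
  have ht_le : ∀ i, t i ≤ lam i := by
    intro i
    have h := re_trace_mul_le (hPi i) (hρ i)
    rw [hρtr i] at h
    simpa using h
  -- q = smallest of the first n probabilities
  have hn1m : n - 1 < m := lt_of_lt_of_le (Nat.pred_lt hn.ne') hnm
  set q : ℝ := p ⟨n - 1, hn1m⟩ with hq
  have hqpos : 0 < q := hp_pos _
  have hcard : F.card = n := by
    have hFeq : F = Finset.map (Fin.castLEEmb hnm) Finset.univ := by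
      ext i
      simp only [hF, Finset.mem_filter, Finset.mem_univ, true_and, Finset.mem_map,
        Fin.castLEEmb_apply]
      constructor
      · intro h
        exact ⟨⟨i, h⟩, rfl⟩
      · rintro ⟨a, rfl⟩
        exact a.2
    rw [hFeq]
    simp
  -- lower bound : n ≤ ∑ lam
  have key : ∑ i ∈ F, p i ≤ ∑ i, p i * lam i := by
    rw [← hopt']
    exact Finset.sum_le_sum fun i _ =>
      mul_le_mul_of_nonneg_left (ht_le i) (hp_pos i).le
  have hsplit : ∑ i, p i * lam i = (∑ i, (p i - q) * lam i) + q * ∑ i, lam i := by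
    rw [Finset.mul_sum, ← Finset.sum_add_distrib]
    exact Finset.sum_congr rfl fun i _ => by ring
  have hbound : ∑ i, (p i - q) * lam i ≤ ∑ i ∈ F, (p i - q) := by
    rw [← Finset.sum_filter_add_sum_filter_not Finset.univ (fun i : Fin m => (i : ℕ) < n)]
    rw [← hF]
    have hb1 : ∑ i ∈ F, (p i - q) * lam i ≤ ∑ i ∈ F, (p i - q) := by
      apply Finset.sum_le_sum
      intro i hi
      have hi' : (i : ℕ) < n := by
        simpa [hF] using hi
      have hpq : q ≤ p i := hp_mono i ⟨n - 1, hn1m⟩ (by rw [Fin.le_def]; simp; omega)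
      calc (p i - q) * lam i ≤ (p i - q) * 1 :=
            mul_le_mul_of_nonneg_left (hlam1 i) (by linarith)
        _ = p i - q := mul_one _
    have hb2 : ∑ i ∈ Finset.univ.filter (fun i : Fin m => ¬ ((i : ℕ) < n)), (p i - q) * lam i
        ≤ 0 := by
      apply Finset.sum_nonpos
      intro i hi
      have hi' : ¬ ((i : ℕ) < n) := by
        simpa using hi
      have hpq : p i ≤ q := hp_mono ⟨n - 1, hn1m⟩ i (by rw [Fin.le_def]; simp; omega)
      exact mul_nonpos_of_nonpos_of_nonneg (by linarith) (hlam0 i)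
    linarith
  have hFq : ∑ i ∈ F, (p i - q) = (∑ i ∈ F, p i) - n * q := by
    rw [Finset.sum_sub_distrib, Finset.sum_const, hcard, nsmul_eq_mul]
  have hnq : q * (n : ℝ) ≤ q * ∑ i, lam i := by linarith
  have hlb : (n : ℝ) ≤ ∑ i, lam i := by
    exact le_of_mul_le_mul_left hnq hqpos
  linarith
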